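/- Every separable infinite-dimensional Hilbert space H of holomorphic functions on the unit disk (continuously embedded in Hol(𝔻)) in which the polynomials form a dense subspace admits a linear polynomial approximation scheme: a sequence of bounded linear operators T_n : H → H such that each T_n(f) is a polynomial and ‖T_n f − f‖_H → 0 for all f ∈ H. -/

import Mathlib

open Filter Metric

theorem stmt_18 {H : Type*} [NormedAddCommGroup H] [InnerProductSpace ℂ H] [CompleteSpace H]
    [TopologicalSpace.SeparableSpace H] (hinf : ¬ FiniteDimensional ℂ H)
    (ι : H →ₗ[ℂ] (ℂ → ℂ)) (hinj : Function.Injective ι)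
    (hholo : ∀ x : H, DifferentiableOn ℂ (ι x) (ball (0 : ℂ) 1))
    (hcont : ∀ r : ℝ, 0 < r → r < 1 →
      ∃ C : ℝ, ∀ (x : H) (z : ℂ), ‖z‖ ≤ r → ‖ι x z‖ ≤ C * ‖x‖)
    (hdense : Dense {x : H | ∃ p : Polynomial ℂ, ∀ z ∈ ball (0 : ℂ) 1, ι x z = p.eval z}) :
    ∃ T : ℕ → H →L[ℂ] H,
      (∀ (n : ℕ) (f : H), ∃ p : Polynomial ℂ,
        ∀ z ∈ ball (0 : ℂ) 1, ι (T n f) z = p.eval z) ∧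
      ∀ f : H, Tendsto (fun n => ‖T n f - f‖) atTop (nhds 0) := by
  classical
  -- The set of "polynomial" vectors is a submodule.
  set S : Set H := {x : H | ∃ p : Polynomial ℂ, ∀ z ∈ ball (0 : ℂ) 1, ι x z = p.eval z}
  have hS0 : (0 : H) ∈ S := ⟨0, fun z _ => by simp⟩
  have hSadd : ∀ x ∈ S, ∀ y ∈ S, x + y ∈ S := by
    rintro x ⟨p, hp⟩ y ⟨q, hq⟩
    exact ⟨p + q, fun z hz => by
      simp [map_add, hp z hz, hq z hz]⟩
  have hSsmul : ∀ (c : ℂ), ∀ x ∈ S, c • x ∈ S := by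
    rintro c x ⟨p, hp⟩
    exact ⟨Polynomial.C c * p, fun z hz => by
      simp [map_smul, hp z hz]⟩
  have hspan : ∀ x ∈ Submodule.span ℂ S, x ∈ S := by
    intro x hx
    refine Submodule.span_induction (fun y hy => hy) hS0 (fun a b _ _ ha hb => hSadd a ha b hb) (fun c a _ ha => hSsmul c a ha) hx
  -- A dense sequence in S.
  obtain ⟨u, hu⟩ := TopologicalSpace.exists_dense_seq H
  have hq : ∀ km : ℕ × ℕ, ∃ y ∈ S, dist (u km.1) y < 1 / (km.2 + 1) := by
    intro km
    have hpos : (0 : ℝ) < 1 / (km.2 + 1) := by positivity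
    obtain ⟨y, hy1, hy2⟩ := Metric.dense_iff.mp hdense (u km.1) _ hpos
    exact ⟨y, hy2, by simpa [dist_comm] using hy1⟩
  choose q hqS hqd using hq
  have hqdense : ∀ (f : H) (ε : ℝ), 0 < ε → ∃ km : ℕ × ℕ, dist f (q km) < ε := by
    intro f ε hε
    obtain ⟨m, hm⟩ := exists_nat_one_div_lt (half_pos hε)
    obtain ⟨k, hk⟩ := Metric.dense_iff.mp hu f (ε / 2) (half_pos hε)
    rcases Set.mem_range.mp hk.2 with ⟨k', rfl⟩
    refine ⟨(k', m), ?_⟩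
    calc dist f (q (k', m)) ≤ dist f (u k') + dist (u k') (q (k', m)) := dist_triangle _ _ _
    _ < ε / 2 + 1 / (m + 1) := by
        exact add_lt_add (by simpa [dist_comm] using hk.1) (by exact_mod_cast hqd (k', m))
    _ ≤ ε / 2 + ε / 2 := by linarith [hm]
    _ = ε := by ring
  -- encode ℕ × ℕ in ℕ
  let e : ℕ ≃ ℕ × ℕ := (Denumerable.eqv (ℕ × ℕ)).symm
  -- finite-dimensional subspaces
  let V : ℕ → Submodule ℂ H := fun n => Submodule.span ℂ (q ∘ e '' Set.Iic n)
  have hVfd : ∀ n, FiniteDimensional ℂ (V n) := fun n =>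
    FiniteDimensional.span_of_finite ℂ ((Set.finite_Iic n).image _)
  have hVproj : ∀ n, Submodule.HasOrthogonalProjection (V n) := by
    intro n
    have := hVfd n
    infer_instance
  have hVS : ∀ n, (V n : Set H) ⊆ S := by
    intro n x hx
    refine hspan x (Submodule.span_mono ?_ hx)
    rintro y ⟨j, _, rfl⟩
    exact hqS (e j)
  have hVmono : ∀ {m n : ℕ}, m ≤ n → V m ≤ V n := by
    intro m n hmn
    exact Submodule.span_mono (Set.image_mono (Set.Iic_subset_Iic.mpr hmn))
  refine ⟨fun n => haveI := hVproj n; (V n).subtypeL.comp ((V n).orthogonalProjectionOnto), ?_, ?_⟩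
  · intro n f
    haveI := hVproj n
    exact hVS n ((V n).orthogonalProjectionOnto f).2
  · intro f
    rw [Metric.tendsto_atTop]
    intro ε hε
    obtain ⟨km, hkm⟩ := hqdense f ε hε
    refine ⟨e.symm km, fun n hn => ?_⟩
    haveI := hVproj n
    have hmem : q km ∈ V n := by
      refine Submodule.subset_span ⟨e.symm km, hn, by simp⟩
    have hle : ‖f - (V n).orthogonalProjectionOnto f‖ ≤ ‖f - q km‖ := by
      rw [← Submodule.starProjection_apply, Submodule.starProjection_minimal]
      exact ciInf_le ⟨0, fun b hb => by rcases hb with ⟨v, rfl⟩; positivity⟩ (⟨q km, hmem⟩ : V n)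
    have : ‖(V n).subtypeL.comp ((V n).orthogonalProjectionOnto) f - f‖ ≤ ‖f - q km‖ := by
      simpa [norm_sub_rev] using hle
    rw [Real.dist_eq]
    have h2 : ‖f - q km‖ < ε := by simpa [dist_eq_norm] using hkm
    have h3 : (0:ℝ) ≤ ‖(V n).subtypeL.comp ((V n).orthogonalProjectionOnto) f - f‖ := norm_nonneg _
    rw [abs_of_nonneg (by simpa using h3)]
    simpa using lt_of_le_of_lt this h2
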